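/- Let X be a nonempty irreducible topological space whose topological Krull dimension is finite. Suppose X is partitioned into finitely many nonempty, pairwise disjoint, locally closed subsets O_1, …, O_k whose union is X, such that for each i the closure of O_i in X is a union of some of the sets O_1, …, O_k. If for some i the topological Krull dimension of O_i (with the subspace topology) equals the topological Krull dimension of X, then O_i is open in X. -/

import Mathlib

open Order TopologicalSpace Set

section aux
variable {X : Type*} [TopologicalSpace X] [IrreducibleSpace X]

/-- A subset with non-dense closure in a finite-dimensional irreducible space has
dimension strictly smaller; here we derive a contradiction from equality. -/
lemma aux_dense {s : Set X} (hsne : s.Nonempty)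
    (hfin : topologicalKrullDim X < ⊤)
    (hdim : topologicalKrullDim ↥s = topologicalKrullDim X) :
    closure s = Set.univ := by
  by_contra hC
  -- the top irreducible closed of X
  have hXirr : IsIrreducible (Set.univ : Set X) := IrreducibleSpace.isIrreducible_univ X
  let T : IrreducibleCloseds X := ⟨Set.univ, hXirr, isClosed_univ⟩
  haveI : Nonempty (IrreducibleCloseds X) := ⟨T⟩
  obtain ⟨x, hx⟩ := hsne
  haveI : Nonempty (IrreducibleCloseds ↥s) :=
    ⟨⟨closure {(⟨x, hx⟩ : ↥s)}, isIrreducible_singleton.closure, isClosed_closure⟩⟩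
  -- recover the image from its closure
  have key : ∀ A : IrreducibleCloseds ↥s,
      (Subtype.val '' (A : Set ↥s)) = closure (Subtype.val '' (A : Set ↥s)) ∩ s := by
    intro A
    obtain ⟨t, ht, hpre⟩ := isClosed_induced_iff.mp A.isClosed
    have himg : Subtype.val '' (A : Set ↥s) = t ∩ s := by
      rw [← hpre, Subtype.image_preimage_coe]; exact Set.inter_comm _ _
    apply subset_antisymm
    · exact Set.subset_inter subset_closure (by rintro _ ⟨a, _, rfl⟩; exact a.2)
    · have : closure (Subtype.val '' (A : Set ↥s)) ⊆ t :=
        closure_minimal (himg ▸ Set.inter_subset_left) ht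
      exact fun y hy => himg ▸ ⟨this hy.1, hy.2⟩
  -- the map on irreducible closeds
  let f : IrreducibleCloseds ↥s → IrreducibleCloseds X := fun A =>
    ⟨closure (Subtype.val '' (A : Set ↥s)),
      (A.isIrreducible.image _ continuous_subtype_val.continuousOn).closure, isClosed_closure⟩
  have finj : Function.Injective f := by
    intro A B hAB
    have : closure (Subtype.val '' (A : Set ↥s)) = closure (Subtype.val '' (B : Set ↥s)) :=
      congrArg IrreducibleCloseds.carrier hAB
    have himg : Subtype.val '' (A : Set ↥s) = Subtype.val '' (B : Set ↥s) := by
      rw [key A, key B, this]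
    exact IrreducibleCloseds.ext (Set.image_injective.mpr Subtype.val_injective himg)
  have fmono : StrictMono f := by
    intro A B hAB
    refine lt_of_le_of_ne ?_ (fun h => hAB.ne (finj h))
    show closure _ ⊆ closure _
    exact closure_mono (Set.image_mono hAB.le)
  have flt : ∀ A : IrreducibleCloseds ↥s, f A < T := by
    intro A
    refine lt_of_le_of_ne (fun y _ => trivial) (fun h => hC ?_)
    have h1 : closure (Subtype.val '' (A : Set ↥s)) = Set.univ :=
      congrArg IrreducibleCloseds.carrier h
    have h2 : closure (Subtype.val '' (A : Set ↥s)) ⊆ closure s :=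
      closure_mono (by rintro _ ⟨a, _, rfl⟩; exact a.2)
    exact Set.eq_univ_of_univ_subset (h1 ▸ h2)
  -- extract the finite dimension
  have h0 : (0 : WithBot ℕ∞) ≤ topologicalKrullDim X := krullDim_nonneg
  obtain ⟨e, he⟩ : ∃ e : ℕ∞, topologicalKrullDim X = (e : WithBot ℕ∞) :=
    WithBot.ne_bot_iff_exists.mp (fun h => by simp [h] at h0) |>.imp fun _ h => h.symm
  obtain ⟨n, hn⟩ : ∃ n : ℕ, e = (n : ℕ∞) := by
    induction e using ENat.recTopCoe with
    | top => rw [he, WithBot.coe_top] at hfin; exact absurd hfin (lt_irrefl _)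
    | coe n => exact ⟨n, rfl⟩
  -- every chain in s gives a longer chain in X
  have hchain : ∀ p : LTSeries (IrreducibleCloseds ↥s), p.length + 1 ≤ n := by
    intro p
    let q : LTSeries (IrreducibleCloseds X) :=
      (p.map f fmono).snoc T (by simpa using flt _)
    have hq : (q.length : WithBot ℕ∞) ≤ krullDim (IrreducibleCloseds X) :=
      Order.LTSeries.length_le_krullDim q
    have hql : q.length = p.length + 1 := rfl
    rw [hql] at hq
    have : ((p.length + 1 : ℕ) : WithBot ℕ∞) ≤ ((n : ℕ∞) : WithBot ℕ∞) := by
      rw [← hn, ← he]; exact_mod_cast hq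
    exact_mod_cast this
  have h1n : 1 ≤ n := by simpa using hchain (RelSeries.singleton _ (Classical.arbitrary _))
  -- dimension of s equals n, but all chains have length ≤ n - 1
  have hds : krullDim (IrreducibleCloseds ↥s) = ((n : ℕ∞) : WithBot ℕ∞) := by
    rw [← hn, ← he]; exact hdim
  rw [krullDim_eq_iSup_length] at hds
  have hsup : (⨆ p : LTSeries (IrreducibleCloseds ↥s), (p.length : ℕ∞)) = (n : ℕ∞) := by
    exact_mod_cast hds
  have : (n : ℕ∞) ≤ ((n - 1 : ℕ) : ℕ∞) := by
    rw [← hsup]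
    exact iSup_le fun p => by exact_mod_cast Nat.le_sub_one_of_lt (hchain p)
  have : n ≤ n - 1 := by exact_mod_cast this
  omega

end aux

/-- Topological content of Lemma 9.3 of the paper: let `X` be a nonempty irreducible
topological space of finite topological Krull dimension, partitioned into finitely many
nonempty pairwise disjoint locally closed pieces, the closure of each piece being a union
of pieces.  If a piece has the same topological Krull dimension as `X`, it is open. -/
theorem stmt6 {X : Type*} [TopologicalSpace X] [IrreducibleSpace X]
    (hfin : topologicalKrullDim X < ⊤)
    {ι : Type*} [Finite ι] (O : ι → Set X)
    (hne : ∀ i, (O i).Nonempty)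
    (hdisj : ∀ i j, i ≠ j → Disjoint (O i) (O j))
    (hcover : ⋃ i, O i = Set.univ)
    (hlc : ∀ i, IsLocallyClosed (O i))
    (hclosure : ∀ i, ∃ s : Set ι, closure (O i) = ⋃ j ∈ s, O j)
    (i : ι) (hdim : topologicalKrullDim ↥(O i) = topologicalKrullDim X) :
    IsOpen (O i) := by
  have hcl : closure (O i) = Set.univ := aux_dense (hne i) hfin hdim
  obtain ⟨U, Z, hU, hZ, hOZ⟩ := hlc i
  have hZuniv : Z = Set.univ :=
    Set.eq_univ_of_univ_subset
      (hcl ▸ closure_minimal (by rw [hOZ]; exact Set.inter_subset_right) hZ)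
  rw [hOZ, hZuniv, Set.inter_univ]
  exact hU
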